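/- With constant meeting rates and vanishing frictions, the firm size distribution converges to the preference distribution: let ℓ : [0,1] → ℝ be continuous on the circle (ℓ(0) = ℓ(1)). Then for every y ∈ [0,1], ∫₀¹ r(r+1)·ℓ(x)/(r + 2·d(x,y))² dx → ℓ(y) as r → 0⁺, where d(x,y) = min_{k∈ℤ} |x − y + k|. -/

import Mathlib

open MeasureTheory

noncomputable def circleDist (x y : ℝ) : ℝ :=
  sInf {v : ℝ | ∃ k : ℤ, v = |x - y + (k : ℝ)|}

lemma circleDist_eq {x y : ℝ} (h : |x - y| ≤ 1) :
    circleDist x y = min |x - y| (1 - |x - y|) := by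
  set t := x - y with ht
  have habs := abs_le.mp h
  unfold circleDist
  apply le_antisymm
  · apply csInf_le
    · exact ⟨0, by rintro v ⟨k, rfl⟩; positivity⟩
    · rcases le_total |t| (1 - |t|) with h1 | h1
      · rw [min_eq_left h1]
        exact ⟨0, by simp [ht]⟩
      · rw [min_eq_right h1]
        rcases le_total 0 t with ht0 | ht0
        · refine ⟨-1, ?_⟩
          rw [abs_of_nonneg ht0]
          push_cast
          rw [show t + (-1:ℝ) = -(1 - t) by ring, abs_neg, abs_of_nonneg (by linarith)]
        · refine ⟨1, ?_⟩
          rw [abs_of_nonpos ht0]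
          push_cast
          rw [abs_of_nonneg (by linarith)]
          ring
  · refine le_csInf ⟨|t|, ⟨0, by simp [ht]⟩⟩ ?_
    rintro v ⟨k, rfl⟩
    rcases eq_or_ne k 0 with rfl | hk
    · simp only [Int.cast_zero, add_zero]; exact min_le_left _ _
    · refine (min_le_right _ _).trans ?_
      have h1 : (1:ℝ) ≤ |(k:ℝ)| := by
        have := Int.one_le_abs hk
        calc (1:ℝ) ≤ (|k| : ℤ) := by exact_mod_cast this
        _ = |(k:ℝ)| := by push_cast; ring
      have h2 : |(k:ℝ)| ≤ |t + k| + |t| := by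
        calc |(k:ℝ)| = |(t + k) - t| := by ring_nf
        _ ≤ |t + k| + |t| := abs_sub _ _
      linarith


lemma kernel_contOn {r y : ℝ} (hr : 0 < r) {s : Set ℝ} (hs : ∀ x ∈ s, |x - y| ≤ 1) :
    ContinuousOn (fun x => r*(r+1) / (r + 2 * min |x - y| (1 - |x - y|))^2) s := by
  apply ContinuousOn.div continuousOn_const
  · apply Continuous.continuousOn; fun_prop
  · intro x hx
    have h1 : (0:ℝ) ≤ min |x-y| (1-|x-y|) :=
      le_min (abs_nonneg _) (by linarith [hs x hx])
    have h2 : 0 < r + 2 * min |x-y| (1-|x-y|) := by linarith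
    exact ne_of_gt (pow_pos h2 2)

lemma half_integral {r : ℝ} (hr : 0 < r) :
    ∫ u in (0:ℝ)..(1/2), r*(r+1) / (r + 2*u)^2
      = (-(r*(r+1))/2) * (r+2*(1/2:ℝ))⁻¹ - (-(r*(r+1))/2) * (r+2*(0:ℝ))⁻¹ := by
  refine intervalIntegral.integral_eq_sub_of_hasDerivAt
    (f := fun u : ℝ => -(r*(r+1))/2 * (r+2*u)⁻¹) ?_ ?_
  · intro u hu
    rw [Set.uIcc_of_le (by norm_num)] at hu
    have hpos : 0 < r + 2*u := by linarith [hu.1]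
    have h1 : HasDerivAt (fun u : ℝ => r + 2*u) 2 u := by
      exact (((hasDerivAt_id u).const_mul (2:ℝ)).const_add r).congr_deriv (by ring)
    have h2 := (h1.inv (ne_of_gt hpos)).const_mul (-(r*(r+1))/2)
    convert h2 using 1
    case e'_4 => rfl
    case e'_8 => rfl
    case e'_9 => ring
  · apply ContinuousOn.intervalIntegrable
    apply ContinuousOn.div continuousOn_const
    · apply Continuous.continuousOn; fun_prop
    · intro u hu
      rw [Set.uIcc_of_le (by norm_num)] at hu
      have hpos : 0 < r + 2*u := by linarith [hu.1]
      exact ne_of_gt (pow_pos hpos 2)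

lemma half_integral' {r : ℝ} (hr : 0 < r) :
    ∫ u in (0:ℝ)..(1/2), r*(r+1) / (r + 2*u)^2 = 1/2 := by
  rw [half_integral hr]
  have h1 : r + 2*(1/2:ℝ) = r + 1 := by ring
  have h2 : r + 2*(0:ℝ) = r := by ring
  rw [h1, h2]
  have hr1 : r + 1 ≠ 0 := by linarith
  field_simp
  ring

lemma kernel_integral_one {r y : ℝ} (hr : 0 < r) (hy0 : 0 ≤ y) (hy1 : y ≤ 1) :
    ∫ x in (0:ℝ)..1, r*(r+1) / (r + 2 * min |x - y| (1 - |x - y|))^2 = 1 := by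
  set K := fun x : ℝ => r*(r+1) / (r + 2 * min |x - y| (1 - |x - y|))^2 with hKdef
  have hcont : ContinuousOn K (Set.Icc (y-1) (y+1)) := by
    apply kernel_contOn hr
    intro x hx
    rw [abs_le]
    exact ⟨by linarith [hx.1], by linarith [hx.2]⟩
  have hint : ∀ a b : ℝ, y - 1 ≤ a → a ≤ b → b ≤ y + 1 → IntervalIntegrable K volume a b := by
    intro a b h1 h2 h3
    apply (hcont.mono ?_).intervalIntegrable
    rw [Set.uIcc_of_le h2]
    exact Set.Icc_subset_Icc h1 h3
  -- shift [0,y] to [1, y+1]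
  have step1 : ∫ x in (0:ℝ)..y, K x = ∫ x in (1:ℝ)..(y+1), K x := by
    have e1 : ∫ x in (0:ℝ)..y, K (x+1) = ∫ x in (0+1:ℝ)..(y+1), K x :=
      intervalIntegral.integral_comp_add_right K 1
    rw [show (0+1:ℝ) = 1 by norm_num] at e1
    rw [← e1]
    apply intervalIntegral.integral_congr
    intro x hx
    rw [Set.uIcc_of_le hy0] at hx
    have h1 : |x - y| = y - x := by
      rw [abs_of_nonpos (by linarith [hx.2])]; ring
    have h2 : |x + 1 - y| = 1 - (y - x) := by
      rw [abs_of_nonneg (by linarith [hx.1])]; ring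
    simp only [hKdef]
    rw [h1, h2, show (1 - (1 - (y - x))) = y - x by ring, min_comm]
  have step2 : ∫ x in (0:ℝ)..1, K x = ∫ x in y..(y+1), K x := by
    have a1 : (∫ x in (0:ℝ)..y, K x) + ∫ x in y..(1:ℝ), K x = ∫ x in (0:ℝ)..1, K x :=
      intervalIntegral.integral_add_adjacent_intervals
        (hint 0 y (by linarith) hy0 (by linarith))
        (hint y 1 (by linarith) hy1 (by linarith))
    have a2 : (∫ x in y..(1:ℝ), K x) + ∫ x in (1:ℝ)..(y+1), K x = ∫ x in y..(y+1), K x :=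
      intervalIntegral.integral_add_adjacent_intervals
        (hint y 1 (by linarith) hy1 (by linarith))
        (hint 1 (y+1) (by linarith) (by linarith) (by linarith))
    rw [← a1, ← a2, step1]
    ring
  rw [step2]
  -- substitute u = x - y
  have step3 : ∫ x in y..(y+1), K x = ∫ u in (0:ℝ)..1, K (u + y) := by
    rw [intervalIntegral.integral_comp_add_right K y]
    norm_num [add_comm]
  rw [step3]
  -- split at 1/2
  have hintK : ∀ a b : ℝ, 0 ≤ a → a ≤ b → b ≤ 1 →
      IntervalIntegrable (fun u => K (u + y)) volume a b := by
    intro a b h1 h2 h3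
    apply ContinuousOn.intervalIntegrable
    apply hcont.comp (by fun_prop : Continuous fun u : ℝ => u + y).continuousOn
    intro u hu
    rw [Set.uIcc_of_le h2] at hu
    simp only [Set.mem_Icc]
    constructor <;> linarith [hu.1, hu.2]
  have split : ∫ u in (0:ℝ)..1, K (u+y)
      = (∫ u in (0:ℝ)..(1/2), K (u+y)) + ∫ u in (1/2:ℝ)..1, K (u+y) :=
    (intervalIntegral.integral_add_adjacent_intervals
      (hintK 0 (1/2) le_rfl (by norm_num) (by norm_num))
      (hintK (1/2) 1 (by norm_num) (by norm_num) le_rfl)).symm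
  have keyA : ∀ u ∈ Set.Icc (0:ℝ) 1, |u + y - y| = u ∧ (u ≤ 1/2 → min u (1-u) = u)
      ∧ (1/2 ≤ u → min u (1-u) = 1-u) := by
    intro u hu
    refine ⟨by rw [show u + y - y = u by ring, abs_of_nonneg hu.1], ?_, ?_⟩
    · intro h; exact min_eq_left (by linarith)
    · intro h; exact min_eq_right (by linarith)
  have pieceA : ∫ u in (0:ℝ)..(1/2), K (u+y) = 1/2 := by
    rw [show (∫ u in (0:ℝ)..(1/2), K (u+y))
        = ∫ u in (0:ℝ)..(1/2), r*(r+1) / (r + 2*u)^2 from ?_]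
    · exact half_integral' hr
    apply intervalIntegral.integral_congr
    intro u hu
    rw [Set.uIcc_of_le (by norm_num)] at hu
    obtain ⟨e1, e2, -⟩ := keyA u ⟨hu.1, by linarith [hu.2]⟩
    simp only [hKdef]
    rw [e1, e2 hu.2]
  have pieceB : ∫ u in (1/2:ℝ)..1, K (u+y) = 1/2 := by
    have e3 : ∫ u in (1/2:ℝ)..1, K (u+y)
        = ∫ u in (1/2:ℝ)..1, (fun v => r*(r+1) / (r + 2*v)^2) (1 - u) := by
      apply intervalIntegral.integral_congr
      intro u hu
      rw [Set.uIcc_of_le (by norm_num)] at hu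
      obtain ⟨e1, -, e2⟩ := keyA u ⟨by linarith [hu.1], hu.2⟩
      simp only [hKdef]
      rw [e1, e2 hu.1]
    rw [e3, intervalIntegral.integral_comp_sub_left (fun v => r*(r+1) / (r + 2*v)^2) 1]
    norm_num
    exact half_integral' hr
  rw [split, pieceA, pieceB]
  norm_num

/-- With constant meeting rates and vanishing frictions, the firm size
distribution converges pointwise to the preference distribution. -/
theorem vanishing_frictions_recover_preferences (ℓ : ℝ → ℝ)
    (hl_cont : ContinuousOn ℓ (Set.Icc 0 1)) (hl_per : ℓ 0 = ℓ 1) :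
    ∀ y ∈ Set.Icc (0:ℝ) 1,
      Filter.Tendsto
        (fun r => ∫ x in (0:ℝ)..1,
          r * (r + 1) * ℓ x / (r + 2 * circleDist x y) ^ 2)
        (nhdsWithin 0 (Set.Ioi 0)) (nhds (ℓ y)) := by
  rintro y ⟨hy0, hy1⟩
  have habs : ∀ x ∈ Set.Icc (0:ℝ) 1, |x - y| ≤ 1 := by
    intro x hx
    rw [abs_le]
    exact ⟨by linarith [hx.1], by linarith [hx.2]⟩
  have hrw : ∀ r : ℝ, (∫ x in (0:ℝ)..1, r * (r + 1) * ℓ x / (r + 2 * circleDist x y) ^ 2)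
      = ∫ x in (0:ℝ)..1,
          (r * (r+1) / (r + 2 * min |x - y| (1 - |x - y|))^2) * ℓ x := by
    intro r
    apply intervalIntegral.integral_congr
    intro x hx
    rw [Set.uIcc_of_le (by norm_num : (0:ℝ) ≤ 1)] at hx
    simp only [circleDist_eq (habs x hx)]
    ring
  simp only [hrw]
  obtain ⟨M, hM⟩ := isCompact_Icc.exists_bound_of_continuousOn hl_cont
  have hM0 : 0 ≤ M := le_trans (norm_nonneg _) (hM 0 (by norm_num))
  have hMy : |ℓ y| ≤ M := by
    have := hM y ⟨hy0, hy1⟩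
    rwa [Real.norm_eq_abs] at this
  rw [Metric.tendsto_nhdsWithin_nhds]
  intro ε hε
  have hUC := isCompact_Icc.uniformContinuousOn_of_continuous hl_cont
  rw [Metric.uniformContinuousOn_iff] at hUC
  obtain ⟨δ₀, hδ₀, hmod⟩ := hUC (ε/8) (by linarith)
  have hnear : ∀ x ∈ Set.Icc (0:ℝ) 1, min |x-y| (1-|x-y|) < δ₀ → |ℓ x - ℓ y| ≤ ε/4 := by
    intro x hx hlt
    rcases min_lt_iff.mp hlt with h | h
    · have e1 := hmod x hx y ⟨hy0, hy1⟩ (by rwa [Real.dist_eq])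
      rw [Real.dist_eq] at e1
      linarith
    · rcases le_total x y with hxy | hxy
      · have hx1 : |x - y| = y - x := by rw [abs_of_nonpos (by linarith)]; ring
        rw [hx1] at h
        have e1 := hmod x hx 0 (by norm_num)
          (by rw [Real.dist_eq, sub_zero, abs_of_nonneg hx.1]; linarith)
        have e2 := hmod 1 (by norm_num) y ⟨hy0, hy1⟩
          (by rw [Real.dist_eq, abs_of_nonneg (by linarith)]; linarith [hx.1])
        rw [Real.dist_eq] at e1 e2
        have e3 : |ℓ x - ℓ y| ≤ |ℓ x - ℓ 0| + |ℓ 1 - ℓ y| := by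
          rw [← hl_per]
          exact abs_sub_le _ _ _
        linarith
      · have hx1 : |x - y| = x - y := by rw [abs_of_nonneg (by linarith)]
        rw [hx1] at h
        have e1 := hmod x hx 1 (by norm_num)
          (by rw [Real.dist_eq, abs_of_nonpos (by linarith [hx.2])]; linarith [hy0])
        have e2 := hmod 0 (by norm_num) y ⟨hy0, hy1⟩
          (by rw [Real.dist_eq, zero_sub, abs_neg, abs_of_nonneg hy0]; linarith [hx.2])
        rw [Real.dist_eq] at e1 e2
        have e3 : |ℓ x - ℓ y| ≤ |ℓ x - ℓ 1| + |ℓ 0 - ℓ y| := by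
          rw [hl_per]
          exact abs_sub_le _ _ _
        linarith
  refine ⟨min 1 (ε * δ₀^2 / (4*(M+1))), by positivity, ?_⟩
  intro r hrI hrd
  have hr : 0 < r := hrI
  rw [Real.dist_eq, sub_zero, abs_of_pos hr] at hrd
  have hr1 : r < 1 := lt_of_lt_of_le hrd (min_le_left _ _)
  have hr2 : r < ε * δ₀^2 / (4*(M+1)) := lt_of_lt_of_le hrd (min_le_right _ _)
  set K := fun x : ℝ => r*(r+1) / (r + 2 * min |x - y| (1 - |x - y|))^2 with hKdef
  have hKcont : ContinuousOn K (Set.Icc 0 1) := kernel_contOn hr habs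
  have hKint : IntervalIntegrable K volume 0 1 := by
    apply ContinuousOn.intervalIntegrable
    rwa [Set.uIcc_of_le (by norm_num : (0:ℝ) ≤ 1)]
  have hKnn : ∀ x : ℝ, 0 ≤ K x := by
    intro x
    apply div_nonneg (by nlinarith) (sq_nonneg _)
  have hKone : ∫ x in (0:ℝ)..1, K x = 1 := kernel_integral_one hr hy0 hy1
  have hKLint : IntervalIntegrable (fun x => K x * ℓ x) volume 0 1 := by
    apply ContinuousOn.intervalIntegrable
    rw [Set.uIcc_of_le (by norm_num : (0:ℝ) ≤ 1)]
    exact hKcont.mul hl_cont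
  have e4 : ∫ x in (0:ℝ)..1, K x * (ℓ x - ℓ y)
      = (∫ x in (0:ℝ)..1, K x * ℓ x) - ℓ y := by
    have hptw : ∀ x : ℝ, K x * (ℓ x - ℓ y) = K x * ℓ x - K x * ℓ y := fun x => by ring
    simp only [hptw]
    rw [intervalIntegral.integral_sub hKLint (hKint.mul_const _),
      intervalIntegral.integral_mul_const, hKone, one_mul]
  set C := 2*M * (r*(r+1)/(2*δ₀)^2) with hCdef
  have hC0 : 0 ≤ C := by
    rw [hCdef]; positivity
  have hbound : ∀ x ∈ Set.Icc (0:ℝ) 1, |K x * (ℓ x - ℓ y)| ≤ ε/4 * K x + C := by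
    intro x hx
    rw [abs_mul, abs_of_nonneg (hKnn x)]
    rcases lt_or_ge (min |x-y| (1-|x-y|)) δ₀ with h | h
    · have h1 := hnear x hx h
      have h2 := mul_le_mul_of_nonneg_left h1 (hKnn x)
      calc K x * |ℓ x - ℓ y| ≤ K x * (ε/4) := h2
      _ = ε/4 * K x := by ring
      _ ≤ ε/4 * K x + C := by linarith
    · have h2 : |ℓ x - ℓ y| ≤ 2*M := by
        have h5 := hM x hx
        rw [Real.norm_eq_abs] at h5
        calc |ℓ x - ℓ y| ≤ |ℓ x| + |ℓ y| := abs_sub _ _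
        _ ≤ 2*M := by linarith
      have h3 : K x ≤ r*(r+1)/(2*δ₀)^2 := by
        have hd0 : 2*δ₀ ≤ r + 2 * min |x-y| (1-|x-y|) := by linarith
        have hsq : (2*δ₀)^2 ≤ (r + 2 * min |x-y| (1-|x-y|))^2 := by nlinarith
        exact div_le_div_of_nonneg_left (by nlinarith) (by positivity) hsq
      have h6 : 0 ≤ ε/4 * K x := by
        have := hKnn x
        positivity
      calc K x * |ℓ x - ℓ y| ≤ (r*(r+1)/(2*δ₀)^2) * (2*M) :=
        mul_le_mul h3 h2 (abs_nonneg _) (by positivity)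
      _ = C := by rw [hCdef]; ring
      _ ≤ ε/4 * K x + C := by linarith
  have hint0 : IntervalIntegrable (fun x => K x * (ℓ x - ℓ y)) volume 0 1 := by
    have := hKLint.sub (hKint.mul_const (ℓ y))
    simpa [mul_sub] using this
  have hint2 : IntervalIntegrable (fun x => ε/4 * K x + C) volume 0 1 :=
    (hKint.const_mul _).add intervalIntegrable_const
  have hmain : |(∫ x in (0:ℝ)..1, K x * ℓ x) - ℓ y| ≤ ε/4 + C := by
    rw [← e4]
    calc |∫ x in (0:ℝ)..1, K x * (ℓ x - ℓ y)|
        ≤ ∫ x in (0:ℝ)..1, |K x * (ℓ x - ℓ y)| :=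
      intervalIntegral.abs_integral_le_integral_abs (by norm_num)
    _ ≤ ∫ x in (0:ℝ)..1, (ε/4 * K x + C) :=
      intervalIntegral.integral_mono_on (by norm_num) hint0.abs hint2 hbound
    _ = ε/4 * (∫ x in (0:ℝ)..1, K x) + (1 - 0) • C := by
      rw [intervalIntegral.integral_add (hKint.const_mul _) intervalIntegrable_const,
        intervalIntegral.integral_const_mul, intervalIntegral.integral_const]
      norm_num
    _ = ε/4 + C := by rw [hKone]; simp
  have hClt : C < ε/4 := by
    have h4 : r * (4*(M+1)) < ε * δ₀^2 := (lt_div_iff₀ (by positivity)).mp hr2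
    rw [hCdef, show 2*M*(r*(r+1)/(2*δ₀)^2) = (2*M*(r*(r+1)))/(2*δ₀)^2 by ring,
      div_lt_iff₀ (by positivity : (0:ℝ) < (2*δ₀)^2)]
    nlinarith [mul_nonneg hM0 hr.le,
      mul_nonneg (mul_nonneg hM0 hr.le) (sub_nonneg.mpr hr1.le)]
  rw [Real.dist_eq]
  have hfin : (∫ x in (0:ℝ)..1, (r * (r+1) / (r + 2 * min |x - y| (1 - |x - y|))^2) * ℓ x)
      = ∫ x in (0:ℝ)..1, K x * ℓ x := rfl
  rw [hfin]
  linarith
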